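/- Let p = 2n+1 be odd with p ≥ 3 and let M be a p×p magic square on [1, p²] (all row sums and column sums equal p(p²+1)/2). Suppose A, B, C are p×p matrices with entries in {0,1,2} such that for each (i,j), {Aᵢⱼ, Bᵢⱼ, Cᵢⱼ} = {0,1,2}, and every row sum and column sum of each of A, B, C equals p. Define PQ = 3M − A, PR = 3M − B, QR = 3M − C (entrywise). Then the entries of PQ, PR, QR together form a bijection onto [1, 3p²], and every row sum and column sum of each of PQ, PR, QR equals 3p(p²+1)/2 − p; consequently the (p,p,p)-board with these rectangles is Cartesian magic with constant m = 3p(p²+1) − 2p. -/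
import Mathlib

/-- Theorem 4.6 construction: from a `p × p` magic square `M` and matrices `A, B, C`
with `{Aᵢⱼ, Bᵢⱼ, Cᵢⱼ} = {0,1,2}` entrywise and all line sums `p`, the rectangles
`PQ = 3M − A`, `PR = 3M − B`, `QR = 3M − C` give a Cartesian magic `(p,p,p)`-board
with constant `3p(p²+1) − 2p`. -/
theorem stmt14 (n : ℕ) (hn : 1 ≤ n) (p : ℕ) (hp : p = 2 * n + 1)
    (M A B C PQ PR QR : Fin p → Fin p → ℕ)
    (hMinj : Function.Injective (fun x : Fin p × Fin p => M x.1 x.2))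
    (hMmem : ∀ i j, M i j ∈ Finset.Icc 1 (p ^ 2))
    (hMrow : ∀ i, ∑ j, M i j = p * (p ^ 2 + 1) / 2)
    (hMcol : ∀ j, ∑ i, M i j = p * (p ^ 2 + 1) / 2)
    (htriple : ∀ i j, ({A i j, B i j, C i j} : Finset ℕ) = ({0, 1, 2} : Finset ℕ))
    (hArow : ∀ i, ∑ j, A i j = p) (hAcol : ∀ j, ∑ i, A i j = p)
    (hBrow : ∀ i, ∑ j, B i j = p) (hBcol : ∀ j, ∑ i, B i j = p)
    (hCrow : ∀ i, ∑ j, C i j = p) (hCcol : ∀ j, ∑ i, C i j = p)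
    (hPQ : ∀ i j, PQ i j = 3 * M i j - A i j)
    (hPR : ∀ i j, PR i j = 3 * M i j - B i j)
    (hQR : ∀ i j, QR i j = 3 * M i j - C i j)
    (L : ((Fin p × Fin p) ⊕ (Fin p × Fin p) ⊕ (Fin p × Fin p)) → ℕ)
    (hL : L = Sum.elim (fun x => PQ x.1 x.2)
      (Sum.elim (fun x => PR x.1 x.2) (fun x => QR x.1 x.2))) :
    Function.Injective L ∧ Set.range L = Set.Icc 1 (3 * p ^ 2) ∧
    (∀ i, ∑ j, PQ i j = 3 * p * (p ^ 2 + 1) / 2 - p) ∧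
    (∀ j, ∑ i, PQ i j = 3 * p * (p ^ 2 + 1) / 2 - p) ∧
    (∀ i, ∑ j, PR i j = 3 * p * (p ^ 2 + 1) / 2 - p) ∧
    (∀ j, ∑ i, PR i j = 3 * p * (p ^ 2 + 1) / 2 - p) ∧
    (∀ i, ∑ j, QR i j = 3 * p * (p ^ 2 + 1) / 2 - p) ∧
    (∀ j, ∑ i, QR i j = 3 * p * (p ^ 2 + 1) / 2 - p) ∧
    (∀ i, (∑ j, PQ i j) + (∑ k, PR i k) = 3 * p * (p ^ 2 + 1) - 2 * p) ∧
    (∀ j, (∑ i, PQ i j) + (∑ k, QR j k) = 3 * p * (p ^ 2 + 1) - 2 * p) ∧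
    (∀ k, (∑ i, PR i k) + (∑ j, QR j k) = 3 * p * (p ^ 2 + 1) - 2 * p) := by
  have hp3 : 3 ≤ p := by omega
  have hop : Odd p := ⟨n, by omega⟩
  have hE2 : 2 ∣ p * (p ^ 2 + 1) := by
    have h1 : Odd (p ^ 2) := by
      rw [pow_two]; exact hop.mul hop
    have h2 : Even (p ^ 2 + 1) := Odd.add_one h1
    exact Dvd.dvd.mul_left h2.two_dvd p
  have hp2 : 1 ≤ p ^ 2 := Nat.one_le_pow _ _ (by omega)
  have hq : 2 * p ≤ p * (p ^ 2 + 1) := by nlinarith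
  -- triple facts
  have tfacts : ∀ i j, A i j ≤ 2 ∧ B i j ≤ 2 ∧ C i j ≤ 2 ∧
      A i j ≠ B i j ∧ A i j ≠ C i j ∧ B i j ≠ C i j := by
    intro i j
    have h := htriple i j
    have hA : A i j = 0 ∨ A i j = 1 ∨ A i j = 2 := by
      have : A i j ∈ ({0, 1, 2} : Finset ℕ) := h ▸ Finset.mem_insert_self _ _
      simpa using this
    have hB : B i j = 0 ∨ B i j = 1 ∨ B i j = 2 := by
      have : B i j ∈ ({0, 1, 2} : Finset ℕ) := h ▸ (by simp)
      simpa using this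
    have hC : C i j = 0 ∨ C i j = 1 ∨ C i j = 2 := by
      have : C i j ∈ ({0, 1, 2} : Finset ℕ) := h ▸ (by simp)
      simpa using this
    rcases hA with h1 | h1 | h1 <;> rcases hB with h2 | h2 | h2 <;>
      rcases hC with h3 | h3 | h3 <;> rw [h1, h2, h3] at h ⊢ <;> revert h <;> decide
  have hM1 : ∀ a : Fin p × Fin p, 1 ≤ M a.1 a.2 ∧ M a.1 a.2 ≤ p ^ 2 :=
    fun a => Finset.mem_Icc.mp (hMmem a.1 a.2)
  have key : ∀ (a b : Fin p × Fin p) (x y : ℕ), x ≤ 2 → y ≤ 2 →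
      3 * M a.1 a.2 - x = 3 * M b.1 b.2 - y → a = b ∧ x = y := by
    intro a b x y hx hy h
    have h1 := hM1 a
    have h2 := hM1 b
    have hMeq : M a.1 a.2 = M b.1 b.2 ∧ x = y := by omega
    exact ⟨hMinj hMeq.1, hMeq.2⟩
  have hinj : Function.Injective L := by
    intro x y hxy
    rcases x with a | a | a <;> rcases y with b | b | b <;>
      simp only [hL, hPQ, hPR, hQR, Sum.elim_inl, Sum.elim_inr] at hxy
    · obtain ⟨hab, _⟩ := key a b _ _ (tfacts a.1 a.2).1 (tfacts b.1 b.2).1 hxy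
      rw [hab]
    · obtain ⟨hab, hv⟩ := key a b _ _ (tfacts a.1 a.2).1 (tfacts b.1 b.2).2.1 hxy
      subst hab; exact absurd hv (tfacts a.1 a.2).2.2.2.1
    · obtain ⟨hab, hv⟩ := key a b _ _ (tfacts a.1 a.2).1 (tfacts b.1 b.2).2.2.1 hxy
      subst hab; exact absurd hv (tfacts a.1 a.2).2.2.2.2.1
    · obtain ⟨hab, hv⟩ := key a b _ _ (tfacts a.1 a.2).2.1 (tfacts b.1 b.2).1 hxy
      subst hab; exact absurd hv.symm (tfacts a.1 a.2).2.2.2.1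
    · obtain ⟨hab, _⟩ := key a b _ _ (tfacts a.1 a.2).2.1 (tfacts b.1 b.2).2.1 hxy
      rw [hab]
    · obtain ⟨hab, hv⟩ := key a b _ _ (tfacts a.1 a.2).2.1 (tfacts b.1 b.2).2.2.1 hxy
      subst hab; exact absurd hv (tfacts a.1 a.2).2.2.2.2.2
    · obtain ⟨hab, hv⟩ := key a b _ _ (tfacts a.1 a.2).2.2.1 (tfacts b.1 b.2).1 hxy
      subst hab; exact absurd hv.symm (tfacts a.1 a.2).2.2.2.2.1
    · obtain ⟨hab, hv⟩ := key a b _ _ (tfacts a.1 a.2).2.2.1 (tfacts b.1 b.2).2.1 hxy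
      subst hab; exact absurd hv.symm (tfacts a.1 a.2).2.2.2.2.2
    · obtain ⟨hab, _⟩ := key a b _ _ (tfacts a.1 a.2).2.2.1 (tfacts b.1 b.2).2.2.1 hxy
      rw [hab]
  -- range
  have hsub : Finset.image L Finset.univ ⊆ Finset.Icc 1 (3 * p ^ 2) := by
    intro v hv
    simp only [Finset.mem_image] at hv
    obtain ⟨x, -, rfl⟩ := hv
    rcases x with a | a | a <;>
      simp only [hL, hPQ, hPR, hQR, Sum.elim_inl, Sum.elim_inr] <;>
      rw [Finset.mem_Icc]
    · have := hM1 a; have := (tfacts a.1 a.2).1; omega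
    · have := hM1 a; have := (tfacts a.1 a.2).2.1; omega
    · have := hM1 a; have := (tfacts a.1 a.2).2.2.1; omega
  have hcard : (Finset.Icc 1 (3 * p ^ 2)).card ≤ (Finset.image L Finset.univ).card := by
    rw [Finset.card_image_of_injective _ hinj, Finset.card_univ, Nat.card_Icc]
    simp only [Fintype.card_sum, Fintype.card_prod, Fintype.card_fin]
    apply le_of_eq
    rw [Nat.add_sub_cancel, pow_two]
    ring
  have himg := Finset.eq_of_subset_of_card_le hsub hcard
  have hrange : Set.range L = Set.Icc 1 (3 * p ^ 2) := by
    calc Set.range L = ↑(Finset.image L Finset.univ) := by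
          rw [Finset.coe_image, Finset.coe_univ, Set.image_univ]
      _ = ↑(Finset.Icc 1 (3 * p ^ 2)) := by rw [himg]
      _ = Set.Icc 1 (3 * p ^ 2) := Finset.coe_Icc _ _
  -- line sums
  have hline : ∀ (u v : Fin p → ℕ), (∀ j, 1 ≤ u j) → (∀ j, v j ≤ 2) →
      (∑ j, u j = p * (p ^ 2 + 1) / 2) → (∑ j, v j = p) →
      ∑ j, (3 * u j - v j) = 3 * p * (p ^ 2 + 1) / 2 - p := by
    intro u v hu1 hv2 hu hv
    have h2 : (∑ j, (3 * u j - v j)) + ∑ j, v j = ∑ j, 3 * u j := by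
      rw [← Finset.sum_add_distrib]
      refine Finset.sum_congr rfl fun j _ => ?_
      have := hu1 j; have := hv2 j; omega
    have h3 : ∑ j, 3 * u j = 3 * ∑ j, u j := (Finset.mul_sum _ _ _).symm
    rw [h3, hu, hv] at h2
    rw [show 3 * p * (p ^ 2 + 1) = 3 * (p * (p ^ 2 + 1)) from by ring]
    omega
  have hMle : ∀ i j, 1 ≤ M i j := fun i j => (hM1 (i, j)).1
  have hPQr : ∀ i, ∑ j, PQ i j = 3 * p * (p ^ 2 + 1) / 2 - p := by
    intro i; simp only [hPQ]
    exact hline (fun j => M i j) (fun j => A i j) (fun j => hMle i j)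
      (fun j => (tfacts i j).1) (hMrow i) (hArow i)
  have hPQc : ∀ j, ∑ i, PQ i j = 3 * p * (p ^ 2 + 1) / 2 - p := by
    intro j; simp only [hPQ]
    exact hline (fun i => M i j) (fun i => A i j) (fun i => hMle i j)
      (fun i => (tfacts i j).1) (hMcol j) (hAcol j)
  have hPRr : ∀ i, ∑ j, PR i j = 3 * p * (p ^ 2 + 1) / 2 - p := by
    intro i; simp only [hPR]
    exact hline (fun j => M i j) (fun j => B i j) (fun j => hMle i j)
      (fun j => (tfacts i j).2.1) (hMrow i) (hBrow i)
  have hPRc : ∀ j, ∑ i, PR i j = 3 * p * (p ^ 2 + 1) / 2 - p := by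
    intro j; simp only [hPR]
    exact hline (fun i => M i j) (fun i => B i j) (fun i => hMle i j)
      (fun i => (tfacts i j).2.1) (hMcol j) (hBcol j)
  have hQRr : ∀ i, ∑ j, QR i j = 3 * p * (p ^ 2 + 1) / 2 - p := by
    intro i; simp only [hQR]
    exact hline (fun j => M i j) (fun j => C i j) (fun j => hMle i j)
      (fun j => (tfacts i j).2.2.1) (hMrow i) (hCrow i)
  have hQRc : ∀ j, ∑ i, QR i j = 3 * p * (p ^ 2 + 1) / 2 - p := by
    intro j; simp only [hQR]
    exact hline (fun i => M i j) (fun i => C i j) (fun i => hMle i j)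
      (fun i => (tfacts i j).2.2.1) (hMcol j) (hCcol j)
  have hfin : (3 * p * (p ^ 2 + 1) / 2 - p) + (3 * p * (p ^ 2 + 1) / 2 - p)
      = 3 * p * (p ^ 2 + 1) - 2 * p := by
    rw [show 3 * p * (p ^ 2 + 1) = 3 * (p * (p ^ 2 + 1)) from by ring]
    omega
  refine ⟨hinj, hrange, hPQr, hPQc, hPRr, hPRc, hQRr, hQRc, ?_, ?_, ?_⟩
  · intro i; rw [hPQr i, hPRr i]; exact hfin
  · intro j; rw [hPQc j, hQRr j]; exact hfin
  · intro k; rw [hPRc k, hQRc k]; exact hfin
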